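/- Let K be a finite field with q elements and fix integers d, r ≥ 1 and n ≥ 0. Then q^{d n² + r n} = Σ_{k=0}^{n} c_q(k,n) · q^{d·n·(n−k)} · u_k, where u_k is the number of full-span tuples on K^k and c_q(k,n) is the number of k-dimensional K-subspaces of K^n. (This is the point-count of the stratification of the affine space End_K(K^n)^d × (K^n)^r by the dimension of the span.) -/

import Mathlib

/-- `tupleSpan K T v` is the `K`-linear span of all vectors of the form
`T i₁ ∘ ⋯ ∘ T iₘ (v j)`, where `m ≥ 0` and `1 ≤ j ≤ r`. -/
def tupleSpan (K : Type*) {V : Type*} [Field K] [AddCommGroup V] [Module K V]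
    {d r : ℕ} (T : Fin d → Module.End K V) (v : Fin r → V) : Submodule K V :=
  Submodule.span K {w | ∃ (l : List (Fin d)) (j : Fin r), w = ((l.map T).prod) (v j)}

/-- The number `u_k` of full-span tuples on `K^k`. -/
noncomputable def fullSpanCount (K : Type*) [Field K] (d r k : ℕ) : ℕ :=
  Nat.card {y : (Fin d → Module.End K (Fin k → K)) × (Fin r → (Fin k → K)) //
    tupleSpan K y.1 y.2 = ⊤}

section Aux

variable {K : Type*} [Field K] {V W : Type*} [AddCommGroup V] [Module K V]
  [AddCommGroup W] [Module K W] {d r : ℕ}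

lemma tupleSpan_prod_apply_mem (T : Fin d → Module.End K V) (v : Fin r → V)
    (l : List (Fin d)) (j : Fin r) : (l.map T).prod (v j) ∈ tupleSpan K T v :=
  Submodule.subset_span ⟨l, j, rfl⟩

lemma tupleSpan_vec_mem (T : Fin d → Module.End K V) (v : Fin r → V) (j : Fin r) :
    v j ∈ tupleSpan K T v :=
  Submodule.subset_span ⟨[], j, by simp⟩

lemma tupleSpan_mapsTo (T : Fin d → Module.End K V) (v : Fin r → V) (i : Fin d)
    {x : V} (hx : x ∈ tupleSpan K T v) : T i x ∈ tupleSpan K T v := by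
  induction hx using Submodule.span_induction with
  | mem x hx =>
    obtain ⟨l, j, rfl⟩ := hx
    simpa using tupleSpan_prod_apply_mem T v (i :: l) j
  | zero => simp
  | add x y _ _ hx hy => simpa using add_mem hx hy
  | smul c x _ hx => simpa using Submodule.smul_mem _ c hx

lemma tupleSpan_map (T : Fin d → Module.End K V) (v : Fin r → V)
    (A : Fin d → Module.End K W) (w : Fin r → W) (ι : W →ₗ[K] V)
    (hcomm : ∀ i, (T i : V →ₗ[K] V) ∘ₗ ι = ι ∘ₗ (A i : W →ₗ[K] W))
    (hv : ∀ j, v j = ι (w j)) :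
    Submodule.map ι (tupleSpan K A w) = tupleSpan K T v := by
  have key : ∀ (l : List (Fin d)) (x : W), ι ((l.map A).prod x) = (l.map T).prod (ι x) := by
    intro l
    induction l with
    | nil => intro x; simp
    | cons i l ih =>
      intro x
      simp only [List.map_cons, List.prod_cons, Module.End.mul_apply]
      rw [← ih x]
      exact (LinearMap.congr_fun (hcomm i) _).symm
  unfold tupleSpan
  rw [Submodule.map_span]
  congr 1
  ext x
  constructor
  · rintro ⟨y, ⟨l, j, rfl⟩, rfl⟩
    exact ⟨l, j, by rw [key, ← hv]⟩
  · rintro ⟨l, j, rfl⟩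
    exact ⟨(l.map A).prod (w j), ⟨l, j, rfl⟩, by rw [key, ← hv]⟩

/-- Transport of full-span tuples along a linear equivalence. -/
noncomputable def fullSpanEquiv (e : W ≃ₗ[K] V) :
    {z : (Fin d → Module.End K W) × (Fin r → W) // tupleSpan K z.1 z.2 = ⊤} ≃
    {y : (Fin d → Module.End K V) × (Fin r → V) // tupleSpan K y.1 y.2 = ⊤} where
  toFun z := ⟨(fun i => e.conj (z.1.1 i), fun j => e (z.1.2 j)), by
    have hmap := tupleSpan_map (fun i => e.conj (z.1.1 i)) (fun j => e (z.1.2 j))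
      z.1.1 z.1.2 (e : W →ₗ[K] V)
      (fun i => by ext x; simp [LinearEquiv.conj_apply]) (fun j => rfl)
    rw [z.2, Submodule.map_top, LinearEquiv.range] at hmap
    exact hmap.symm⟩
  invFun y := ⟨(fun i => e.symm.conj (y.1.1 i), fun j => e.symm (y.1.2 j)), by
    have hmap := tupleSpan_map (fun i => e.symm.conj (y.1.1 i)) (fun j => e.symm (y.1.2 j))
      y.1.1 y.1.2 (e.symm : V →ₗ[K] W)
      (fun i => by ext x; simp [LinearEquiv.conj_apply]) (fun j => rfl)
    rw [y.2, Submodule.map_top, LinearEquiv.range] at hmap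
    exact hmap.symm⟩
  left_inv z := by
    apply Subtype.ext
    refine Prod.ext (funext fun i => ?_) (funext fun j => by simp)
    ext x
    simp [LinearEquiv.conj_apply]
  right_inv y := by
    apply Subtype.ext
    refine Prod.ext (funext fun i => ?_) (funext fun j => by simp)
    ext x
    simp [LinearEquiv.conj_apply]

lemma card_fullSpan_eq (k : ℕ) [FiniteDimensional K W] (hk : Module.finrank K W = k) :
    Nat.card {z : (Fin d → Module.End K W) × (Fin r → W) // tupleSpan K z.1 z.2 = ⊤} =
      fullSpanCount K d r k := by
  have e : W ≃ₗ[K] (Fin k → K) := (Module.finBasisOfFinrankEq K W hk).equivFun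
  exact Nat.card_congr (fullSpanEquiv e.symm).symm

end Aux

section Fiber

variable {K : Type*} [Field K] {n d r : ℕ}

/-- Stratum equivalence: tuples with span exactly `W` correspond to full-span tuples on `W`
together with arbitrary linear data on a complement. -/
noncomputable def fiberEquiv (Wsub C : Submodule K (Fin n → K)) (hC : IsCompl Wsub C) :
    {y : (Fin d → Module.End K (Fin n → K)) × (Fin r → (Fin n → K)) //
        tupleSpan K y.1 y.2 = Wsub} ≃
    ({z : (Fin d → Module.End K Wsub) × (Fin r → Wsub) // tupleSpan K z.1 z.2 = ⊤} ×
      (Fin d → (C →ₗ[K] (Fin n → K)))) where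
  toFun y :=
    (⟨(fun i => (Wsub.projectionOnto C hC) ∘ₗ (y.1.1 i) ∘ₗ Wsub.subtype,
       fun j => ⟨y.1.2 j, (SetLike.ext_iff.mp y.2 _).mp (tupleSpan_vec_mem y.1.1 y.1.2 j)⟩), by
      have hcomm : ∀ i, (y.1.1 i : (Fin n → K) →ₗ[K] (Fin n → K)) ∘ₗ Wsub.subtype =
          Wsub.subtype ∘ₗ ((Wsub.projectionOnto C hC) ∘ₗ (y.1.1 i) ∘ₗ Wsub.subtype) := by
        intro i
        refine LinearMap.ext fun x => ?_
        have hmem : y.1.1 i x ∈ Wsub := (SetLike.ext_iff.mp y.2 _).mp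
          (tupleSpan_mapsTo _ _ i ((SetLike.ext_iff.mp y.2 _).mpr x.2))
        exact (congrArg Subtype.val
          (Submodule.projectionOnto_apply_left hC ⟨y.1.1 i x, hmem⟩)).symm
      have hmap := tupleSpan_map y.1.1 y.1.2
        (fun i => (Wsub.projectionOnto C hC) ∘ₗ (y.1.1 i) ∘ₗ Wsub.subtype)
        (fun j => ⟨y.1.2 j, (SetLike.ext_iff.mp y.2 _).mp (tupleSpan_vec_mem y.1.1 y.1.2 j)⟩)
        Wsub.subtype hcomm (fun j => rfl)
      apply Submodule.map_injective_of_injective Wsub.injective_subtype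
      rw [hmap, y.2, Submodule.map_top, Submodule.range_subtype]⟩,
     fun i => (y.1.1 i) ∘ₗ C.subtype)
  invFun z :=
    ⟨(fun i => Wsub.subtype ∘ₗ (z.1.1.1 i) ∘ₗ (Wsub.projectionOnto C hC)
         + (z.2 i) ∘ₗ (C.projectionOnto Wsub hC.symm),
      fun j => ↑(z.1.1.2 j)), by
      have hcomm : ∀ i, (Wsub.subtype ∘ₗ (z.1.1.1 i) ∘ₗ (Wsub.projectionOnto C hC)
            + (z.2 i) ∘ₗ (C.projectionOnto Wsub hC.symm)) ∘ₗ Wsub.subtype =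
          Wsub.subtype ∘ₗ (z.1.1.1 i) := by
        intro i
        refine LinearMap.ext fun x => ?_
        simp [Submodule.projectionOnto_apply_left,
          Submodule.projectionOnto_apply_right]
      have hmap := tupleSpan_map _ _ z.1.1.1 z.1.1.2 Wsub.subtype hcomm (fun j => rfl)
      rw [z.1.2, Submodule.map_top, Submodule.range_subtype] at hmap
      exact hmap.symm⟩
  left_inv y := by
    apply Subtype.ext
    refine Prod.ext (funext fun i => ?_) (funext fun j => rfl)
    refine LinearMap.ext fun x => ?_
    simp only [LinearMap.add_apply, LinearMap.comp_apply, Submodule.coe_subtype]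
    have hmem : y.1.1 i ↑(Wsub.projectionOnto C hC x) ∈ Wsub :=
      (SetLike.ext_iff.mp y.2 _).mp (tupleSpan_mapsTo _ _ i
        ((SetLike.ext_iff.mp y.2 _).mpr (Wsub.projectionOnto C hC x).2))
    have h1 : ((Wsub.projectionOnto C hC
          (y.1.1 i ↑(Wsub.projectionOnto C hC x))) : Fin n → K) =
        y.1.1 i ↑(Wsub.projectionOnto C hC x) :=
      congrArg Subtype.val (Submodule.projectionOnto_apply_left hC ⟨_, hmem⟩)
    rw [h1, ← map_add]
    exact congrArg (y.1.1 i) (Submodule.projection_add_projection_eq_self hC x)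
  right_inv z := by
    refine Prod.ext (Subtype.ext (Prod.ext (funext fun i => ?_)
      (funext fun j => Subtype.ext rfl))) (funext fun i => ?_)
    · refine LinearMap.ext fun x => ?_
      simp [Submodule.projectionOnto_apply_left,
        Submodule.projectionOnto_apply_right]
    · refine LinearMap.ext fun c => ?_
      simp [Submodule.projectionOnto_apply_left,
        Submodule.projectionOnto_apply_right]

lemma card_fiber [Fintype K] (W : Submodule K (Fin n → K)) :
    Nat.card {y : (Fin d → Module.End K (Fin n → K)) × (Fin r → (Fin n → K)) //
        tupleSpan K y.1 y.2 = W} =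
      Fintype.card K ^ (d * n * (n - Module.finrank K W)) *
        fullSpanCount K d r (Module.finrank K W) := by
  obtain ⟨C, hC⟩ := W.exists_isCompl
  have hfin : Finite (C →ₗ[K] (Fin n → K)) :=
    Finite.of_injective (fun f => (f : C → (Fin n → K))) DFunLike.coe_injective
  letI : Fintype (C →ₗ[K] (Fin n → K)) := Fintype.ofFinite _
  rw [Nat.card_congr (fiberEquiv W C hC), Nat.card_prod,
    card_fullSpan_eq (Module.finrank K W) rfl, Nat.card_fun, Nat.card_eq_fintype_card,
    Nat.card_eq_fintype_card, Fintype.card_fin, Module.card_eq_pow_finrank (K := K)]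
  have h1 : Module.finrank K W + Module.finrank K C = n := by
    have h := Submodule.finrank_add_eq_of_isCompl hC
    rwa [Module.finrank_fin_fun] at h
  have hrk : Module.finrank K (C →ₗ[K] (Fin n → K)) = (n - Module.finrank K W) * n := by
    rw [Module.finrank_linearMap, Module.finrank_fin_fun]
    have h2 : Module.finrank K C = n - Module.finrank K W := by omega
    rw [h2]
  rw [hrk, ← pow_mul, mul_comm]
  ring_nf

end Fiber

/-- Point-count of the stratification of `End(K^n)^d × (K^n)^r` by the dimension of the span:
`q^(dn²+rn) = Σ_{k=0}^n c_q(k,n) · q^(d·n·(n-k)) · u_k`. -/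
theorem stmt_6 {K : Type*} [Field K] [Fintype K] {q d r n : ℕ}
    (hq : Fintype.card K = q) (hd : 1 ≤ d) (hr : 1 ≤ r) :
    q ^ (d * n ^ 2 + r * n) =
      ∑ k ∈ Finset.range (n + 1),
        Nat.card {Λ : Submodule K (Fin n → K) // Module.finrank K Λ = k} *
          q ^ (d * n * (n - k)) * fullSpanCount K d r k := by
  classical
  subst hq
  have hfinSub : Finite (Submodule K (Fin n → K)) :=
    Finite.of_injective (fun W => (W : Set (Fin n → K))) SetLike.coe_injective
  letI : Fintype (Submodule K (Fin n → K)) := Fintype.ofFinite _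
  have hfinEnd : Finite (Module.End K (Fin n → K)) :=
    Finite.of_injective (fun f => (f : (Fin n → K) → (Fin n → K))) DFunLike.coe_injective
  letI : Fintype (Module.End K (Fin n → K)) := Fintype.ofFinite _
  set α := (Fin d → Module.End K (Fin n → K)) × (Fin r → (Fin n → K)) with hα
  -- total count
  have htot : Fintype.card K ^ (d * n ^ 2 + r * n) = Nat.card α := by
    rw [Nat.card_eq_fintype_card, Fintype.card_prod, Fintype.card_fun, Fintype.card_fun,
      Fintype.card_fin, Fintype.card_fin, Module.card_eq_pow_finrank (K := K) (V := Module.End K (Fin n → K)),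
      Module.card_eq_pow_finrank (K := K) (V := Fin n → K)]
    have h1 : Module.finrank K (Module.End K (Fin n → K)) = n ^ 2 := by
      show Module.finrank K ((Fin n → K) →ₗ[K] (Fin n → K)) = n ^ 2
      rw [Module.finrank_linearMap, Module.finrank_fin_fun]
      ring
    rw [h1, Module.finrank_fin_fun, ← pow_mul, ← pow_mul, ← pow_add]
    ring_nf
  -- fiber decomposition
  have hdec : Nat.card α =
      ∑ W : Submodule K (Fin n → K), Nat.card {y : α // tupleSpan K y.1 y.2 = W} := by
    rw [Nat.card_congr (Equiv.sigmaFiberEquiv (fun y : α => tupleSpan K y.1 y.2)).symm,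
      Nat.card_eq_fintype_card, Fintype.card_sigma]
    exact Finset.sum_congr rfl fun W _ => (Nat.card_eq_fintype_card).symm
  rw [htot, hdec]
  have hfib : ∀ W : Submodule K (Fin n → K),
      Nat.card {y : α // tupleSpan K y.1 y.2 = W} =
        Fintype.card K ^ (d * n * (n - Module.finrank K W)) *
          fullSpanCount K d r (Module.finrank K W) := fun W => card_fiber W
  rw [Finset.sum_congr rfl fun W _ => hfib W]
  rw [← Finset.sum_fiberwise_of_maps_to (g := fun W : Submodule K (Fin n → K) =>
      Module.finrank K W) (t := Finset.range (n + 1))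
      (fun W _ => Finset.mem_range.mpr (Nat.lt_succ_of_le (by
        simpa [Module.finrank_fin_fun] using Submodule.finrank_le W)))]
  refine Finset.sum_congr rfl fun k hk => ?_
  rw [Finset.sum_congr rfl (fun W hW => by
      rw [(Finset.mem_filter.mp hW).2]), Finset.sum_const, smul_eq_mul,
    Nat.card_eq_fintype_card, Fintype.card_subtype]
  ring
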